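/- Let ξ = Σ_{i=1}^r |η_i⟩⟨η_i| be a positive semidefinite operator on H̃, where each vector η_i has the form η_i = ⊕_μ √d_μ |η_{iμ}⟩⟩ for d_μ×d_μ matrices η_{iμ}. Suppose ξ is isotropic and satisfies the seed normalization (1/|G|) Σ_{ĝ∈G} Ũ(ĝ) ξ Ũ(ĝ)† = I. Then for every μ: Σ_{i=1}^r η_{iμ} η_{iμ}† = I_{d_μ} and Σ_{i=1}^r η_{iμ}ᵀ η_{iμ}* = I_{d_μ}. -/

import Mathlib

open Matrix Kronecker ComplexOrder

noncomputable section

/-- A matrix representation is irreducible iff its commutant consists of scalars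
(Schur's criterion, which over `ℂ` is equivalent to irreducibility). -/
def IsIrrep {G : Type} [Group G] {n : ℕ} (U : G →* Matrix.unitaryGroup (Fin n) ℂ) : Prop :=
  ∀ T : Matrix (Fin n) (Fin n) ℂ,
    (∀ g : G, T * (U g : Matrix (Fin n) (Fin n) ℂ) = (U g : Matrix (Fin n) (Fin n) ℂ) * T) →
    ∃ c : ℂ, T = c • (1 : Matrix (Fin n) (Fin n) ℂ)

/-- Equivalence of two matrix representations: an invertible intertwiner exists. -/
def RepEquiv {G : Type} [Group G] {n m : ℕ} (U : G →* Matrix.unitaryGroup (Fin n) ℂ)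
    (V : G →* Matrix.unitaryGroup (Fin m) ℂ) : Prop :=
  ∃ T : Matrix (Fin m) (Fin n) ℂ, Function.Bijective T.mulVec ∧
    ∀ g : G, T * (U g : Matrix (Fin n) (Fin n) ℂ) = (V g : Matrix (Fin m) (Fin m) ℂ) * T

/-- The block-diagonal representation `Ũ(g) = ⊕_μ U^μ(g) ⊗ I_{d_μ}`
on `H̃ = ⊕_μ ℂ^{d_μ} ⊗ ℂ^{d_μ}`. -/
def Utilde {G : Type} [Group G] {ι : Type} [Fintype ι] [DecidableEq ι] (d : ι → ℕ)
    (U : ∀ μ, G →* Matrix.unitaryGroup (Fin (d μ)) ℂ) (g : G) :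
    Matrix (Σ μ, Fin (d μ) × Fin (d μ)) (Σ μ, Fin (d μ) × Fin (d μ)) ℂ :=
  Matrix.blockDiagonal'
    (fun μ => (U μ g : Matrix (Fin (d μ)) (Fin (d μ)) ℂ) ⊗ₖ (1 : Matrix (Fin (d μ)) (Fin (d μ)) ℂ))

/-- The modular conjugate representation `Ũ^R(g) = ⊕_μ I_{d_μ} ⊗ conj (U^μ(g))`. -/
def UtildeR {G : Type} [Group G] {ι : Type} [Fintype ι] [DecidableEq ι] (d : ι → ℕ)
    (U : ∀ μ, G →* Matrix.unitaryGroup (Fin (d μ)) ℂ) (g : G) :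
    Matrix (Σ μ, Fin (d μ) × Fin (d μ)) (Σ μ, Fin (d μ) × Fin (d μ)) ℂ :=
  Matrix.blockDiagonal'
    (fun μ => (1 : Matrix (Fin (d μ)) (Fin (d μ)) ℂ) ⊗ₖ
      ((U μ g : Matrix (Fin (d μ)) (Fin (d μ)) ℂ).map (starRingEnd ℂ)))

set_option linter.unusedSectionVars false

section auxSchur
variable {G : Type} [Group G] [Fintype G] {n : ℕ}

lemma coe_U_inv (U : G →* Matrix.unitaryGroup (Fin n) ℂ) (g : G) :
    (U g⁻¹ : Matrix (Fin n) (Fin n) ℂ) = (U g : Matrix (Fin n) (Fin n) ℂ)ᴴ := by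
  rw [map_inv, ← Matrix.star_eq_conjTranspose]
  rfl

lemma U_hc_mul (U : G →* Matrix.unitaryGroup (Fin n) ℂ) (g : G) :
    (U g : Matrix (Fin n) (Fin n) ℂ)ᴴ * (U g : Matrix (Fin n) (Fin n) ℂ) = 1 := by
  rw [← Matrix.star_eq_conjTranspose]
  exact Matrix.UnitaryGroup.star_mul_self (U g)

lemma U_mul_hc (U : G →* Matrix.unitaryGroup (Fin n) ℂ) (g : G) :
    (U g : Matrix (Fin n) (Fin n) ℂ) * (U g : Matrix (Fin n) (Fin n) ℂ)ᴴ = 1 := by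
  have := U_hc_mul U g⁻¹
  rw [coe_U_inv, Matrix.conjTranspose_conjTranspose] at this
  exact this

lemma schur_avg (U : G →* Matrix.unitaryGroup (Fin n) ℂ) (hirr : IsIrrep U) (hn : 0 < n)
    (M : Matrix (Fin n) (Fin n) ℂ) :
    ∑ g : G, (U g : Matrix (Fin n) (Fin n) ℂ) * M * (U g : Matrix (Fin n) (Fin n) ℂ)ᴴ
      = (((Fintype.card G : ℂ) * M.trace) / n) • 1 := by
  set T := ∑ g : G, (U g : Matrix (Fin n) (Fin n) ℂ) * M * (U g : Matrix (Fin n) (Fin n) ℂ)ᴴ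
    with hT
  have hcomm : ∀ h : G, T * (U h : Matrix (Fin n) (Fin n) ℂ)
      = (U h : Matrix (Fin n) (Fin n) ℂ) * T := by
    intro h
    rw [hT, Finset.sum_mul, Finset.mul_sum]
    refine Fintype.sum_equiv (Equiv.mulLeft h⁻¹) _ _ fun g => ?_
    simp only [Equiv.coe_mulLeft]
    have e : (U (h⁻¹ * g) : Matrix (Fin n) (Fin n) ℂ)
        = (U h : Matrix (Fin n) (Fin n) ℂ)ᴴ * (U g : Matrix (Fin n) (Fin n) ℂ) := by
      rw [_root_.map_mul, Matrix.UnitaryGroup.mul_val, coe_U_inv]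
    rw [e, Matrix.conjTranspose_mul, Matrix.conjTranspose_conjTranspose]
    calc (U g : Matrix (Fin n) (Fin n) ℂ) * M * (U g : Matrix (Fin n) (Fin n) ℂ)ᴴ
          * (U h : Matrix (Fin n) (Fin n) ℂ)
        = ((U h : Matrix (Fin n) (Fin n) ℂ) * (U h : Matrix (Fin n) (Fin n) ℂ)ᴴ)
          * ((U g : Matrix (Fin n) (Fin n) ℂ) * M
            * ((U g : Matrix (Fin n) (Fin n) ℂ)ᴴ * (U h : Matrix (Fin n) (Fin n) ℂ))) := by
          rw [U_mul_hc, Matrix.one_mul]; simp only [Matrix.mul_assoc]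
      _ = (U h : Matrix (Fin n) (Fin n) ℂ) * ((U h : Matrix (Fin n) (Fin n) ℂ)ᴴ
            * (U g : Matrix (Fin n) (Fin n) ℂ) * M
            * ((U g : Matrix (Fin n) (Fin n) ℂ)ᴴ * (U h : Matrix (Fin n) (Fin n) ℂ))) := by
          simp only [Matrix.mul_assoc]
  obtain ⟨c, hc⟩ := hirr T hcomm
  have htr : T.trace = (Fintype.card G : ℂ) * M.trace := by
    rw [hT, Matrix.trace_sum]
    have : ∀ g : G, ((U g : Matrix (Fin n) (Fin n) ℂ) * M
        * (U g : Matrix (Fin n) (Fin n) ℂ)ᴴ).trace = M.trace := by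
      intro g
      rw [Matrix.trace_mul_cycle, U_hc_mul, Matrix.one_mul]
    simp [this, Finset.sum_const]
  have hne : (n : ℂ) ≠ 0 := Nat.cast_ne_zero.mpr hn.ne'
  have hcval : c = ((Fintype.card G : ℂ) * M.trace) / n := by
    have h2 : c * n = (Fintype.card G : ℂ) * M.trace := by
      rw [← htr, hc, Matrix.trace_smul, Matrix.trace_one, smul_eq_mul]
      simp
    exact (eq_div_iff hne).mpr h2
  rw [hc, hcval]

lemma schur_entry (U : G →* Matrix.unitaryGroup (Fin n) ℂ) (hirr : IsIrrep U) (hn : 0 < n)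
    (a j c k : Fin n) :
    ∑ g : G, (U g : Matrix (Fin n) (Fin n) ℂ) a j
        * (starRingEnd ℂ) ((U g : Matrix (Fin n) (Fin n) ℂ) c k)
      = ((Fintype.card G : ℂ) / n) * (if a = c then 1 else 0) * (if j = k then 1 else 0) := by
  have h := schur_avg U hirr hn
    (Matrix.of fun p q => (if p = j then (1:ℂ) else 0) * (if q = k then 1 else 0))
  have h2 := congrFun (congrFun (congrArg
    (fun M : Matrix (Fin n) (Fin n) ℂ => (M : Matrix (Fin n) (Fin n) ℂ)) h) a) c
  simp only [Matrix.sum_apply, Matrix.smul_apply, smul_eq_mul] at h2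
  have hl : ∀ g : G, ((U g : Matrix (Fin n) (Fin n) ℂ)
      * Matrix.of (fun p q => (if p = j then (1:ℂ) else 0) * (if q = k then 1 else 0))
      * (U g : Matrix (Fin n) (Fin n) ℂ)ᴴ) a c
      = (U g : Matrix (Fin n) (Fin n) ℂ) a j
        * (starRingEnd ℂ) ((U g : Matrix (Fin n) (Fin n) ℂ) c k) := by
    intro g
    simp [Matrix.mul_apply, Matrix.conjTranspose_apply, ite_mul, mul_ite, mul_comm,
      Finset.sum_ite_eq, Finset.sum_ite_eq']
  rw [Finset.sum_congr rfl (fun g _ => hl g)] at h2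
  rw [h2]
  have htr : (Matrix.of fun p q => (if p = j then (1:ℂ) else 0)
      * (if q = k then 1 else 0)).trace = if j = k then 1 else 0 := by
    simp [Matrix.trace, Matrix.diag, Finset.sum_ite_eq', eq_comm]
  rw [htr, Matrix.one_apply]
  by_cases hac : a = c <;> by_cases hjk : j = k <;> simp [hac, hjk]

end auxSchur

lemma conj_vecMulVec {m : Type} [Fintype m] (M : Matrix m m ℂ) (x : m → ℂ) :
    M * Matrix.vecMulVec x (star x) * Mᴴ
      = Matrix.vecMulVec (M *ᵥ x) (star (M *ᵥ x)) := by
  ext i j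
  simp only [Matrix.mul_apply, Matrix.vecMulVec_apply, Matrix.conjTranspose_apply,
    Matrix.mulVec, dotProduct, Pi.star_apply, Finset.sum_mul, Finset.mul_sum,
    star_sum, star_mul']
  refine Finset.sum_congr rfl fun q _ => Finset.sum_congr rfl fun p _ => ?_
  ring

lemma blockDiagonal'_mulVecAux {ι : Type} [Fintype ι] [DecidableEq ι] {κ : ι → Type}
    [∀ i, Fintype (κ i)] [∀ i, DecidableEq (κ i)]
    (N : ∀ i, Matrix (κ i) (κ i) ℂ) (w : (Σ i, κ i) → ℂ) (μ : ι) (p : κ μ) :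
    (Matrix.blockDiagonal' N *ᵥ w) ⟨μ, p⟩ = ∑ p', N μ p p' * w ⟨μ, p'⟩ := by
  rw [Matrix.mulVec, dotProduct, ← Finset.univ_sigma_univ, Finset.sum_sigma]
  rw [Finset.sum_eq_single μ]
  · exact Finset.sum_congr rfl fun p' _ => by rw [Matrix.blockDiagonal'_apply_eq]
  · intro ν _ hν
    exact Finset.sum_eq_zero fun p' _ => by
      rw [Matrix.blockDiagonal'_apply_ne _ _ _ hν.symm, zero_mul]
  · intro h; exact absurd (Finset.mem_univ μ) h

section auxUtilde
variable {G : Type} [Group G] [Fintype G] {ι : Type} [Fintype ι] [DecidableEq ι]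
  (d : ι → ℕ) (U : ∀ μ, G →* Matrix.unitaryGroup (Fin (d μ)) ℂ)

lemma Utilde_mul (g h : G) : Utilde d U g * Utilde d U h = Utilde d U (g * h) := by
  unfold Utilde
  rw [← Matrix.blockDiagonal'_mul]
  apply congrArg
  funext μ
  rw [← Matrix.mul_kronecker_mul, Matrix.one_mul, _root_.map_mul, Matrix.UnitaryGroup.mul_val]

lemma Utilde_one : Utilde d U 1 = 1 := by
  unfold Utilde
  rw [← Matrix.blockDiagonal'_one]
  apply congrArg
  funext μ
  rw [_root_.map_one]
  rw [show ((1 : Matrix.unitaryGroup (Fin (d μ)) ℂ) : Matrix (Fin (d μ)) (Fin (d μ)) ℂ)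
    = 1 from rfl]
  exact Matrix.one_kronecker_one

lemma Utilde_mul_inv (g : G) : Utilde d U g * Utilde d U g⁻¹ = 1 := by
  rw [Utilde_mul, mul_inv_cancel, Utilde_one]

lemma Utilde_mulVec (g : G) (w : (Σ μ, Fin (d μ) × Fin (d μ)) → ℂ) (μ : ι)
    (a b : Fin (d μ)) :
    (Utilde d U g *ᵥ w) ⟨μ, (a, b)⟩
      = ∑ x, (U μ g : Matrix (Fin (d μ)) (Fin (d μ)) ℂ) a x * w ⟨μ, (x, b)⟩ := by
  rw [Utilde, blockDiagonal'_mulVecAux]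
  rw [← Finset.univ_product_univ, Finset.sum_product]
  refine Finset.sum_congr rfl fun x _ => ?_
  rw [Finset.sum_eq_single b]
  · rw [Matrix.kroneckerMap_apply, Matrix.one_apply_eq]; ring
  · intro y _ hy
    rw [Matrix.kroneckerMap_apply, Matrix.one_apply_ne (Ne.symm hy)]
    ring
  · intro h; exact absurd (Finset.mem_univ b) h

lemma UtildeR_mulVec (g : G) (w : (Σ μ, Fin (d μ) × Fin (d μ)) → ℂ) (μ : ι)
    (a b : Fin (d μ)) :
    (UtildeR d U g *ᵥ w) ⟨μ, (a, b)⟩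
      = ∑ y, (starRingEnd ℂ) ((U μ g : Matrix (Fin (d μ)) (Fin (d μ)) ℂ) b y)
          * w ⟨μ, (a, y)⟩ := by
  rw [UtildeR, blockDiagonal'_mulVecAux]
  rw [← Finset.univ_product_univ, Finset.sum_product]
  rw [Finset.sum_eq_single a]
  · refine Finset.sum_congr rfl fun y _ => ?_
    rw [Matrix.kroneckerMap_apply, Matrix.one_apply_eq, Matrix.map_apply, one_mul]
  · intro x _ hx
    exact Finset.sum_eq_zero fun y _ => by
      rw [Matrix.kroneckerMap_apply, Matrix.one_apply_ne (Ne.symm hx), zero_mul, zero_mul]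
  · intro h; exact absurd (Finset.mem_univ a) h

end auxUtilde

lemma key_sum {G : Type} [Group G] [Fintype G] {n r : ℕ} (hn : 0 < n)
    (s : ℂ) (hs : s * s = (n : ℂ)) (hsc : (starRingEnd ℂ) s = s)
    (u : G → Fin n → ℂ)
    (horth : ∀ j k : Fin n, ∑ g : G, u g j * (starRingEnd ℂ) (u g k)
      = ((Fintype.card G : ℂ) / n) * (if j = k then 1 else 0))
    (x y : Fin r → Fin n → ℂ) :
    (Fintype.card G : ℂ)⁻¹ * ∑ g : G, ∑ i, (∑ j, u g j * (s * x i j))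
        * (starRingEnd ℂ) (∑ k, u g k * (s * y i k))
      = ∑ i, ∑ j, x i j * (starRingEnd ℂ) (y i j) := by
  have hcard : (Fintype.card G : ℂ) ≠ 0 := Nat.cast_ne_zero.mpr Fintype.card_ne_zero
  have hnne : (n : ℂ) ≠ 0 := Nat.cast_ne_zero.mpr hn.ne'
  have hinner : ∀ i, ∑ g : G, (∑ j, u g j * (s * x i j))
      * (starRingEnd ℂ) (∑ k, u g k * (s * y i k))
      = (Fintype.card G : ℂ) * ∑ j, x i j * (starRingEnd ℂ) (y i j) := by
    intro i
    have h1 : ∀ g : G, (∑ j, u g j * (s * x i j))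
        * (starRingEnd ℂ) (∑ k, u g k * (s * y i k))
        = ∑ j, ∑ k, ((n : ℂ) * (x i j * (starRingEnd ℂ) (y i k)))
            * (u g j * (starRingEnd ℂ) (u g k)) := by
      intro g
      rw [map_sum, Finset.sum_mul_sum]
      refine Finset.sum_congr rfl fun j _ => Finset.sum_congr rfl fun k _ => ?_
      rw [_root_.map_mul, _root_.map_mul, hsc]
      rw [show u g j * (s * x i j) * ((starRingEnd ℂ) (u g k) * (s * (starRingEnd ℂ) (y i k)))
          = (s * s) * ((x i j * (starRingEnd ℂ) (y i k))
            * (u g j * (starRingEnd ℂ) (u g k))) from by ring, hs]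
      ring
    calc ∑ g : G, (∑ j, u g j * (s * x i j))
          * (starRingEnd ℂ) (∑ k, u g k * (s * y i k))
        = ∑ g : G, ∑ j, ∑ k, ((n : ℂ) * (x i j * (starRingEnd ℂ) (y i k)))
            * (u g j * (starRingEnd ℂ) (u g k)) :=
          Finset.sum_congr rfl fun g _ => h1 g
      _ = ∑ j, ∑ k, ((n : ℂ) * (x i j * (starRingEnd ℂ) (y i k)))
            * ∑ g : G, u g j * (starRingEnd ℂ) (u g k) := by
          rw [Finset.sum_comm]
          refine Finset.sum_congr rfl fun j _ => ?_
          rw [Finset.sum_comm]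
          exact Finset.sum_congr rfl fun k _ => (Finset.mul_sum _ _ _).symm
      _ = ∑ j, ∑ k, ((n : ℂ) * (x i j * (starRingEnd ℂ) (y i k)))
            * (((Fintype.card G : ℂ) / n) * if j = k then 1 else 0) := by
          simp only [horth]
      _ = ∑ j, ((n : ℂ) * (x i j * (starRingEnd ℂ) (y i j)))
            * ((Fintype.card G : ℂ) / n) := by
          refine Finset.sum_congr rfl fun j _ => ?_
          simp [mul_ite, Finset.sum_ite_eq]
      _ = (Fintype.card G : ℂ) * ∑ j, x i j * (starRingEnd ℂ) (y i j) := by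
          rw [Finset.mul_sum]
          refine Finset.sum_congr rfl fun j _ => ?_
          field_simp
  rw [Finset.sum_comm,
    Finset.sum_congr rfl fun i (_ : i ∈ Finset.univ) => hinner i,
    ← Finset.mul_sum, ← mul_assoc, inv_mul_cancel₀ hcard, one_mul]

/-- Normalization of the blocks of an isotropic seed: if `ξ = Σᵢ |ηᵢ⟩⟨ηᵢ|` with
`ηᵢ = ⊕_μ √d_μ |η_{iμ}⟩⟩` is isotropic and satisfies the seed normalization
`|G|⁻¹ Σ_ĝ Ũ(ĝ) ξ Ũ(ĝ)† = 1`, then `Σᵢ η_{iμ} η_{iμ}† = I` and `Σᵢ η_{iμ}ᵀ η_{iμ}* = I`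
for every `μ`. -/
theorem stmt14 {G : Type} [Group G] [Fintype G] [DecidableEq G]
    {ι : Type} [Fintype ι] [DecidableEq ι] (d : ι → ℕ) (hd : ∀ μ, 0 < d μ)
    (U : ∀ μ, G →* Matrix.unitaryGroup (Fin (d μ)) ℂ)
    (hirr : ∀ μ, IsIrrep (U μ))
    (hineq : Pairwise fun μ ν => ¬ RepEquiv (U μ) (U ν))
    {r : ℕ} (A : Fin r → ∀ μ, Matrix (Fin (d μ)) (Fin (d μ)) ℂ)
    (ξ : Matrix (Σ μ, Fin (d μ) × Fin (d μ)) (Σ μ, Fin (d μ) × Fin (d μ)) ℂ)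
    (hξ : ξ = ∑ i, Matrix.vecMulVec
      (fun q : Σ μ, Fin (d μ) × Fin (d μ) => (Real.sqrt (d q.1) : ℂ) * A i q.1 q.2.1 q.2.2)
      (star fun q : Σ μ, Fin (d μ) × Fin (d μ) =>
        (Real.sqrt (d q.1) : ℂ) * A i q.1 q.2.1 q.2.2))
    (hiso : ∀ g : G, (Utilde d U g * UtildeR d U g) * ξ * (Utilde d U g * UtildeR d U g)ᴴ = ξ)
    (hnorm : (Fintype.card G : ℂ)⁻¹ •
      ∑ ghat : G, Utilde d U ghat * ξ * (Utilde d U ghat)ᴴ = 1) :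
    ∀ μ, (∑ i, A i μ * (A i μ)ᴴ = 1) ∧
      (∑ i, (A i μ)ᵀ * (A i μ).map (starRingEnd ℂ) = 1) := by
  classical
  -- rank-one conjugation of ξ
  have hconjM : ∀ M : Matrix (Σ ν, Fin (d ν) × Fin (d ν)) (Σ ν, Fin (d ν) × Fin (d ν)) ℂ,
      M * ξ * Mᴴ = ∑ i, Matrix.vecMulVec
        (M *ᵥ fun q : Σ ν, Fin (d ν) × Fin (d ν) =>
          (Real.sqrt (d q.1) : ℂ) * A i q.1 q.2.1 q.2.2)
        (star (M *ᵥ fun q : Σ ν, Fin (d ν) × Fin (d ν) =>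
          (Real.sqrt (d q.1) : ℂ) * A i q.1 q.2.1 q.2.2)) := by
    intro M
    rw [hξ, Matrix.mul_sum, Matrix.sum_mul]
    exact Finset.sum_congr rfl fun i _ => conj_vecMulVec M _
  -- isotropy rearrangement & transformed normalization
  have key : ∀ g : G, Utilde d U g * ξ * (Utilde d U g)ᴴ
      = UtildeR d U g⁻¹ * ξ * (UtildeR d U g⁻¹)ᴴ := by
    intro g
    have e1 : Utilde d U g * Utilde d U g⁻¹ = 1 := Utilde_mul_inv d U g
    conv_lhs => rw [← hiso g⁻¹]
    rw [Matrix.conjTranspose_mul (Utilde d U g⁻¹) (UtildeR d U g⁻¹)]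
    simp only [Matrix.mul_assoc]
    rw [← Matrix.conjTranspose_mul, e1, Matrix.conjTranspose_one, Matrix.mul_one,
      ← Matrix.mul_assoc, e1, Matrix.one_mul]
  have hnormR : (Fintype.card G : ℂ)⁻¹ •
      ∑ g : G, UtildeR d U g * ξ * (UtildeR d U g)ᴴ = 1 := by
    rw [← hnorm]
    congr 1
    exact (Fintype.sum_equiv (Equiv.inv G) _ _ fun g => key g).symm
  intro μ
  have hn := hd μ
  have hs : ((Real.sqrt (d μ) : ℝ) : ℂ) * ((Real.sqrt (d μ) : ℝ) : ℂ) = ((d μ : ℕ) : ℂ) := by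
    rw [← Complex.ofReal_mul, Real.mul_self_sqrt (Nat.cast_nonneg _)]
    norm_num
  have hsc : (starRingEnd ℂ) ((Real.sqrt (d μ) : ℝ) : ℂ) = ((Real.sqrt (d μ) : ℝ) : ℂ) :=
    Complex.conj_ofReal _
  have hone : ∀ (p q : Fin (d μ) × Fin (d μ)),
      (1 : Matrix (Σ ν, Fin (d ν) × Fin (d ν)) (Σ ν, Fin (d ν) × Fin (d ν)) ℂ)
        ⟨μ, p⟩ ⟨μ, q⟩ = if p = q then 1 else 0 := by
    intro p q
    by_cases h : p = q
    · subst h; simp [Matrix.one_apply]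
    · rw [if_neg h]
      exact Matrix.one_apply_ne fun hc => h (eq_of_heq (Sigma.mk.inj_iff.mp hc).2)
  -- second identity
  have main2 : ∀ b e : Fin (d μ),
      ∑ i, ∑ j, A i μ j b * (starRingEnd ℂ) (A i μ j e) = if b = e then 1 else 0 := by
    intro b e
    set a₀ : Fin (d μ) := ⟨0, hn⟩ with ha₀
    have h : ((Fintype.card G : ℂ)⁻¹ •
        ∑ ghat : G, Utilde d U ghat * ξ * (Utilde d U ghat)ᴴ) ⟨μ, (a₀, b)⟩ ⟨μ, (a₀, e)⟩
        = (1 : Matrix (Σ ν, Fin (d ν) × Fin (d ν)) (Σ ν, Fin (d ν) × Fin (d ν)) ℂ)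
          ⟨μ, (a₀, b)⟩ ⟨μ, (a₀, e)⟩ := by rw [hnorm]
    rw [Matrix.smul_apply, Matrix.sum_apply, smul_eq_mul, hone] at h
    have hterm : ∀ g : G, (Utilde d U g * ξ * (Utilde d U g)ᴴ) ⟨μ, (a₀, b)⟩ ⟨μ, (a₀, e)⟩
        = ∑ i, (∑ j, (U μ g : Matrix (Fin (d μ)) (Fin (d μ)) ℂ) a₀ j
            * (((Real.sqrt (d μ) : ℝ) : ℂ) * A i μ j b))
          * (starRingEnd ℂ) (∑ k, (U μ g : Matrix (Fin (d μ)) (Fin (d μ)) ℂ) a₀ k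
            * (((Real.sqrt (d μ) : ℝ) : ℂ) * A i μ k e)) := by
      intro g
      rw [hconjM (Utilde d U g), Matrix.sum_apply]
      refine Finset.sum_congr rfl fun i _ => ?_
      rw [Matrix.vecMulVec_apply, Pi.star_apply,
        Utilde_mulVec d U g _ μ a₀ b, Utilde_mulVec d U g _ μ a₀ e]
      rfl
    rw [Finset.sum_congr rfl fun g _ => hterm g] at h
    rw [key_sum hn ((Real.sqrt (d μ) : ℝ) : ℂ) hs hsc
      (fun g j => (U μ g : Matrix (Fin (d μ)) (Fin (d μ)) ℂ) a₀ j)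
      (fun j k => by
        rw [schur_entry (U μ) (hirr μ) hn a₀ j a₀ k, if_pos rfl, mul_one])
      (fun i j => A i μ j b) (fun i j => A i μ j e)] at h
    rw [h]
    simp [Prod.ext_iff]
  -- first identity
  have main1 : ∀ a c : Fin (d μ),
      ∑ i, ∑ j, A i μ a j * (starRingEnd ℂ) (A i μ c j) = if a = c then 1 else 0 := by
    intro a c
    set b₀ : Fin (d μ) := ⟨0, hn⟩ with hb₀
    have h : ((Fintype.card G : ℂ)⁻¹ •
        ∑ g : G, UtildeR d U g * ξ * (UtildeR d U g)ᴴ) ⟨μ, (a, b₀)⟩ ⟨μ, (c, b₀)⟩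
        = (1 : Matrix (Σ ν, Fin (d ν) × Fin (d ν)) (Σ ν, Fin (d ν) × Fin (d ν)) ℂ)
          ⟨μ, (a, b₀)⟩ ⟨μ, (c, b₀)⟩ := by rw [hnormR]
    rw [Matrix.smul_apply, Matrix.sum_apply, smul_eq_mul, hone] at h
    have hterm : ∀ g : G, (UtildeR d U g * ξ * (UtildeR d U g)ᴴ) ⟨μ, (a, b₀)⟩ ⟨μ, (c, b₀)⟩
        = ∑ i, (∑ j, (starRingEnd ℂ) ((U μ g : Matrix (Fin (d μ)) (Fin (d μ)) ℂ) b₀ j)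
            * (((Real.sqrt (d μ) : ℝ) : ℂ) * A i μ a j))
          * (starRingEnd ℂ) (∑ k, (starRingEnd ℂ)
              ((U μ g : Matrix (Fin (d μ)) (Fin (d μ)) ℂ) b₀ k)
            * (((Real.sqrt (d μ) : ℝ) : ℂ) * A i μ c k)) := by
      intro g
      rw [hconjM (UtildeR d U g), Matrix.sum_apply]
      refine Finset.sum_congr rfl fun i _ => ?_
      rw [Matrix.vecMulVec_apply, Pi.star_apply,
        UtildeR_mulVec d U g _ μ a b₀, UtildeR_mulVec d U g _ μ c b₀]
      rfl
    rw [Finset.sum_congr rfl fun g _ => hterm g] at h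
    have horthB : ∀ j k : Fin (d μ),
        ∑ g : G, (starRingEnd ℂ) ((U μ g : Matrix (Fin (d μ)) (Fin (d μ)) ℂ) b₀ j)
          * (starRingEnd ℂ) ((starRingEnd ℂ) ((U μ g : Matrix (Fin (d μ)) (Fin (d μ)) ℂ) b₀ k))
        = ((Fintype.card G : ℂ) / (d μ)) * (if j = k then 1 else 0) := by
      intro j k
      have e1 : ∀ g : G,
          (starRingEnd ℂ) ((U μ g : Matrix (Fin (d μ)) (Fin (d μ)) ℂ) b₀ j)
            * (starRingEnd ℂ) ((starRingEnd ℂ)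
              ((U μ g : Matrix (Fin (d μ)) (Fin (d μ)) ℂ) b₀ k))
          = (U μ g : Matrix (Fin (d μ)) (Fin (d μ)) ℂ) b₀ k
            * (starRingEnd ℂ) ((U μ g : Matrix (Fin (d μ)) (Fin (d μ)) ℂ) b₀ j) := by
        intro g; rw [Complex.conj_conj]; ring
      rw [Finset.sum_congr rfl fun g _ => e1 g,
        schur_entry (U μ) (hirr μ) hn b₀ k b₀ j, if_pos rfl, mul_one]
      by_cases hjk : j = k
      · simp [hjk]
      · simp [hjk, Ne.symm hjk]
    rw [key_sum hn ((Real.sqrt (d μ) : ℝ) : ℂ) hs hsc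
      (fun g j => (starRingEnd ℂ) ((U μ g : Matrix (Fin (d μ)) (Fin (d μ)) ℂ) b₀ j))
      horthB (fun i j => A i μ a j) (fun i j => A i μ c j)] at h
    rw [h]
    simp [Prod.ext_iff]
  constructor
  · ext a c
    simp only [Matrix.sum_apply, Matrix.mul_apply, Matrix.conjTranspose_apply,
      Matrix.one_apply]
    exact main1 a c
  · ext b e
    simp only [Matrix.sum_apply, Matrix.mul_apply, Matrix.transpose_apply,
      Matrix.map_apply, Matrix.one_apply]
    exact main2 b e

end
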